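/- If C_m and C_n (m, n ≥ 3) are cycles each with exactly one negative edge, and m, n > 3, then the balancing dimension of their Cartesian product C_m⁻ □ C_n⁻ equals 2. -/

import Mathlib

open Finset
open scoped Classical

/-- A signed graph: a simple graph together with a ±1 sign on each edge. -/
structure SGraph (V : Type*) where
  G : SimpleGraph V
  sign : V → V → ℤ
  sign_symm : ∀ u v, sign u v = sign v u
  sign_mem : ∀ u v, G.Adj u v → sign u v = 1 ∨ sign u v = -1

variable {V V1 V2 W : Type*}

/-- `ζ` is a positive k-switching function for the signed graph `S`. -/
def IsPosSwitching [Fintype V] (S : SGraph V) (k : ℕ) (ζ : V → Fin k → ℤ) : Prop :=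
  (∀ v i, ζ v i = -1 ∨ ζ v i = 0 ∨ ζ v i = 1) ∧
  (∀ u v, S.G.Adj u v → (∑ i, ζ u i * ζ v i) ≠ 0) ∧
  (∀ u v, S.G.Adj u v → S.sign u v * Int.sign (∑ i, ζ u i * ζ v i) = 1)

def HasPosSwitching [Fintype V] (S : SGraph V) (k : ℕ) : Prop :=
  ∃ ζ : V → Fin k → ℤ, IsPosSwitching S k ζ

/-- The balancing dimension: least `k ≥ 1` admitting a positive k-switching function. -/
noncomputable def bdim [Fintype V] (S : SGraph V) : ℕ :=
  sInf {k | 1 ≤ k ∧ HasPosSwitching S k}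

/-- A signed graph is balanced iff it can be switched to all-positive by a 1-switching. -/
def SGraph.Balanced [Fintype V] (S : SGraph V) : Prop := HasPosSwitching S 1

/-- The negation of a signed graph. -/
def SGraph.neg (S : SGraph V) : SGraph V where
  G := S.G
  sign := fun u v => - S.sign u v
  sign_symm := fun u v => by (try dsimp only); rw [S.sign_symm]
  sign_mem := fun u v h => by rcases S.sign_mem u v h with h1 | h1 <;> simp [h1]

def SGraph.Antibalanced [Fintype V] (S : SGraph V) : Prop := S.neg.Balanced

/-- Switching equivalence of signed graphs. -/
def SwitchEquiv (S1 S2 : SGraph V) : Prop :=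
  S1.G = S2.G ∧ ∃ η : V → ℤ, (∀ v, η v = 1 ∨ η v = -1) ∧
    ∀ u v, S1.G.Adj u v → S2.sign u v = η u * S1.sign u v * η v

/-- The Cartesian product of signed graphs. -/
noncomputable def cartProd (S1 : SGraph V1) (S2 : SGraph V2) : SGraph (V1 × V2) where
  G := S1.G □ S2.G
  sign := fun p q => if p.2 = q.2 then S1.sign p.1 q.1 else S2.sign p.2 q.2
  sign_symm := by
    intro u v
    (try dsimp only)
    rcases eq_or_ne u.2 v.2 with h | h
    · rw [if_pos h, if_pos h.symm, S1.sign_symm]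
    · rw [if_neg h, if_neg (Ne.symm h), S2.sign_symm]
  sign_mem := by
    intro u v h
    (try dsimp only)
    rcases (SimpleGraph.boxProd_adj.mp h) with ⟨h1, h2⟩ | ⟨h1, h2⟩
    · rw [if_pos h2]; exact S1.sign_mem _ _ h1
    · rw [if_neg h1.ne]; exact S2.sign_mem _ _ h1
/-- The HG-lexicographic product of signed graphs. -/
noncomputable def lexHG (S1 : SGraph V1) (S2 : SGraph V2) : SGraph (V1 × V2) where
  G := { Adj := fun p q => S1.G.Adj p.1 q.1 ∨ (p.1 = q.1 ∧ S2.G.Adj p.2 q.2)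
         symm := by
           refine ⟨?_⟩; rintro p q (h | ⟨h1, h2⟩)
           · exact Or.inl h.symm
           · exact Or.inr ⟨h1.symm, h2.symm⟩
         loopless := by
           refine ⟨?_⟩; rintro p (h | ⟨_, h⟩)
           · exact S1.G.irrefl h
           · exact S2.G.irrefl h }
  sign := fun p q => if p.1 = q.1 then S2.sign p.2 q.2 else S1.sign p.1 q.1
  sign_symm := by
    intro u v
    (try dsimp only)
    rcases eq_or_ne u.1 v.1 with h | h
    · rw [if_pos h, if_pos h.symm, S2.sign_symm]
    · rw [if_neg h, if_neg (Ne.symm h), S1.sign_symm]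
  sign_mem := by
    rintro p q (h | ⟨h1, h2⟩)
    · (try dsimp only); rw [if_neg h.ne]; exact S1.sign_mem _ _ h
    · (try dsimp only); rw [if_pos h1]; exact S2.sign_mem _ _ h2

/-- The BCD-lexicographic product of signed graphs. -/
noncomputable def lexBCD (S1 : SGraph V1) (S2 : SGraph V2) : SGraph (V1 × V2) where
  G := { Adj := fun p q => S1.G.Adj p.1 q.1 ∨ (p.1 = q.1 ∧ S2.G.Adj p.2 q.2)
         symm := by
           refine ⟨?_⟩; rintro p q (h | ⟨h1, h2⟩)
           · exact Or.inl h.symm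
           · exact Or.inr ⟨h1.symm, h2.symm⟩
         loopless := by
           refine ⟨?_⟩; rintro p (h | ⟨_, h⟩)
           · exact S1.G.irrefl h
           · exact S2.G.irrefl h }
  sign := fun p q =>
    if S2.G.Adj p.2 q.2 then
      (if S1.G.Adj p.1 q.1 then S1.sign p.1 q.1 * S2.sign p.2 q.2 else S2.sign p.2 q.2)
    else S1.sign p.1 q.1
  sign_symm := by
    intro u v
    (try dsimp only)
    rw [S1.G.adj_comm v.1 u.1, S2.G.adj_comm v.2 u.2, S1.sign_symm v.1 u.1,
      S2.sign_symm v.2 u.2]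
  sign_mem := by
    rintro p q (h | ⟨h1, h2⟩) <;> (try dsimp only)
    · by_cases h2 : S2.G.Adj p.2 q.2
      · rw [if_pos h2, if_pos h]
        rcases S1.sign_mem _ _ h with e1 | e1 <;> rcases S2.sign_mem _ _ h2 with e2 | e2 <;>
          simp [e1, e2]
      · rw [if_neg h2]; exact S1.sign_mem _ _ h
    · rw [if_pos h2, if_neg (h1 ▸ S1.G.irrefl)]
      exact S2.sign_mem _ _ h2

/-- The tensor product of signed graphs. -/
def tensorProd (S1 : SGraph V1) (S2 : SGraph V2) : SGraph (V1 × V2) where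
  G := { Adj := fun p q => S1.G.Adj p.1 q.1 ∧ S2.G.Adj p.2 q.2
         symm := ⟨fun p q ⟨h1, h2⟩ => ⟨h1.symm, h2.symm⟩⟩
         loopless := ⟨fun p ⟨h1, _⟩ => S1.G.irrefl h1⟩ }
  sign := fun p q => S1.sign p.1 q.1 * S2.sign p.2 q.2
  sign_symm := by
    intro u v
    (try dsimp only)
    rw [S1.sign_symm, S2.sign_symm]
  sign_mem := by
    rintro p q ⟨h1, h2⟩
    (try dsimp only)
    rcases S1.sign_mem _ _ h1 with e1 | e1 <;> rcases S2.sign_mem _ _ h2 with e2 | e2 <;>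
      simp [e1, e2]

/-- The strong product of signed graphs. -/
noncomputable def strongProd (S1 : SGraph V1) (S2 : SGraph V2) : SGraph (V1 × V2) where
  G := { Adj := fun p q => (S1.G.Adj p.1 q.1 ∧ p.2 = q.2) ∨ (p.1 = q.1 ∧ S2.G.Adj p.2 q.2) ∨
           (S1.G.Adj p.1 q.1 ∧ S2.G.Adj p.2 q.2)
         symm := by
           refine ⟨?_⟩; rintro p q (⟨h1, h2⟩ | ⟨h1, h2⟩ | ⟨h1, h2⟩)
           · exact Or.inl ⟨h1.symm, h2.symm⟩
           · exact Or.inr (Or.inl ⟨h1.symm, h2.symm⟩)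
           · exact Or.inr (Or.inr ⟨h1.symm, h2.symm⟩)
         loopless := by
           refine ⟨?_⟩; rintro p (⟨h1, _⟩ | ⟨_, h2⟩ | ⟨h1, _⟩)
           · exact S1.G.irrefl h1
           · exact S2.G.irrefl h2
           · exact S1.G.irrefl h1 }
  sign := fun p q =>
    if p.1 = q.1 then S2.sign p.2 q.2
    else if p.2 = q.2 then S1.sign p.1 q.1
    else S1.sign p.1 q.1 * S2.sign p.2 q.2
  sign_symm := by
    intro u v
    (try dsimp only)
    rcases eq_or_ne u.1 v.1 with h | h
    · rw [if_pos h, if_pos h.symm, S2.sign_symm]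
    · rw [if_neg h, if_neg (Ne.symm h)]
      rcases eq_or_ne u.2 v.2 with h' | h'
      · rw [if_pos h', if_pos h'.symm, S1.sign_symm]
      · rw [if_neg h', if_neg (Ne.symm h'), S1.sign_symm, S2.sign_symm]
  sign_mem := by
    rintro p q (⟨h1, h2⟩ | ⟨h1, h2⟩ | ⟨h1, h2⟩) <;> (try dsimp only)
    · rw [if_neg h1.ne, if_pos h2]; exact S1.sign_mem _ _ h1
    · rw [if_pos h1]; exact S2.sign_mem _ _ h2
    · rw [if_neg h1.ne, if_neg h2.ne]
      rcases S1.sign_mem _ _ h1 with e1 | e1 <;> rcases S2.sign_mem _ _ h2 with e2 | e2 <;>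
        simp [e1, e2]
/-- The cycle on `ZMod n` (vertices `0,1,…,n-1`) with the single negative edge `{0,1}`. -/
noncomputable def Cneg (n : ℕ) : SGraph (ZMod n) where
  G := { Adj := fun i j => i ≠ j ∧ (i - j = 1 ∨ j - i = 1)
         symm := ⟨fun i j ⟨h1, h2⟩ => ⟨h1.symm, h2.symm⟩⟩
         loopless := ⟨fun i ⟨h1, _⟩ => h1 rfl⟩ }
  sign := fun i j => if (i = 0 ∧ j = 1) ∨ (i = 1 ∧ j = 0) then -1 else 1
  sign_symm := by
    intro u v
    (try dsimp only)
    exact if_congr (by tauto) rfl rfl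
  sign_mem := by
    intro u v _
    (try dsimp only)
    by_cases h : (u = 0 ∧ v = 1) ∨ (u = 1 ∧ v = 0)
    · rw [if_pos h]; exact Or.inr rfl
    · rw [if_neg h]; exact Or.inl rfl

/-- The all-negative complete signed graph on `n` vertices. -/
def Kneg (n : ℕ) : SGraph (Fin n) where
  G := ⊤
  sign := fun _ _ => -1
  sign_symm := fun _ _ => rfl
  sign_mem := fun _ _ _ => Or.inr rfl

/-- The edgeless signed graph on `k` vertices. -/
def Nk (k : ℕ) : SGraph (Fin k) where
  G := ⊥
  sign := fun _ _ => 1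
  sign_symm := fun _ _ => rfl
  sign_mem := fun _ _ h => (h.elim)

/-- The lexicographic product of simple graphs. -/
def lexProdGraph (G : SimpleGraph V1) (H : SimpleGraph V2) : SimpleGraph (V1 × V2) where
  Adj p q := G.Adj p.1 q.1 ∨ (p.1 = q.1 ∧ H.Adj p.2 q.2)
  symm := by
    refine ⟨?_⟩; rintro p q (h | ⟨h1, h2⟩)
    · exact Or.inl h.symm
    · exact Or.inr ⟨h1.symm, h2.symm⟩
  loopless := by
    refine ⟨?_⟩; rintro p (h | ⟨_, h⟩)
    · exact G.irrefl h
    · exact H.irrefl h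


/-! ### Auxiliary machinery for stmt3 -/

/-- vectors in 8 directions -/
def vec8 : ZMod 8 → ℤ × ℤ := fun t =>
  match t.val with
  | 0 => (1,0) | 1 => (1,1) | 2 => (0,1) | 3 => (-1,1)
  | 4 => (-1,0) | 5 => (-1,-1) | 6 => (0,-1) | _ => (1,-1)

def dotv (p q : ℤ × ℤ) : ℤ := p.1*q.1 + p.2*q.2

lemma dotv_comm (p q : ℤ × ℤ) : dotv p q = dotv q p := by
  unfold dotv; ring

lemma vec8_mem : ∀ t : ZMod 8, ((vec8 t).1 = -1 ∨ (vec8 t).1 = 0 ∨ (vec8 t).1 = 1)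
    ∧ ((vec8 t).2 = -1 ∨ (vec8 t).2 = 0 ∨ (vec8 t).2 = 1) := by decide

lemma dotv_pos : ∀ s d : ZMod 8, d = 0 ∨ d = 7 → 0 < dotv (vec8 s) (vec8 (s + d)) := by decide

lemma dotv_neg3 : ∀ s : ZMod 8, dotv (vec8 s) (vec8 (s + 3)) = -1 := by decide

/-- angle function along a negative cycle -/
def af (m : ℕ) : ZMod m → ZMod 8 := fun x =>
  if x.val = 1 then 3 else if x.val = 2 then 2 else if x.val = 3 then 1 else 0

lemma val_succ (m : ℕ) [NeZero m] (hm : 1 < m) (i : ZMod m) :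
    (i + 1).val = if i.val + 1 = m then 0 else i.val + 1 := by
  haveI : Fact (1 < m) := ⟨hm⟩
  rw [ZMod.val_add, ZMod.val_one]
  rcases eq_or_ne (i.val + 1) m with h | h
  · simp [h]
  · rw [Nat.mod_eq_of_lt (lt_of_le_of_ne (Nat.succ_le_of_lt i.val_lt) h), if_neg h]

lemma af_step (m : ℕ) [NeZero m] (hm : 3 < m) (i : ZMod m) :
    (i = 0 ∧ af m (i+1) - af m i = 3) ∨
      (i ≠ 0 ∧ (af m (i+1) - af m i = 0 ∨ af m (i+1) - af m i = 7)) := by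
  have hv := val_succ m (by omega) i
  have hlt := ZMod.val_lt i
  have h0 : i = 0 ↔ i.val = 0 := (ZMod.val_eq_zero i).symm
  have ea : af m i = if i.val = 1 then 3 else if i.val = 2 then 2
      else if i.val = 3 then 1 else 0 := rfl
  have eb : af m (i+1) = if (i+1).val = 1 then 3 else if (i+1).val = 2 then 2
      else if (i+1).val = 3 then 1 else 0 := rfl
  rw [hv] at eb
  rcases eq_or_ne i.val 0 with h | h
  · left
    refine ⟨h0.mpr h, ?_⟩
    rw [h, if_neg (show ¬ (0 + 1 = m) by omega)] at eb
    rw [ea, eb, h]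
    decide
  · right
    refine ⟨fun hc => h (h0.mp hc), ?_⟩
    rcases eq_or_ne i.val 1 with h1 | h1
    · rw [h1, if_neg (show ¬ (1 + 1 = m) by omega)] at eb
      rw [ea, eb, h1]; right; decide
    rcases eq_or_ne i.val 2 with h2 | h2
    · rw [h2, if_neg (show ¬ (2 + 1 = m) by omega)] at eb
      rw [ea, eb, h2]; right; decide
    rcases eq_or_ne i.val 3 with h3 | h3
    · rw [h3] at eb
      rw [ea, h3]
      rcases eq_or_ne (3 + 1) m with h4 | h4
      · rw [if_pos h4] at eb; rw [eb]; right; decide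
      · rw [if_neg h4] at eb; rw [eb]; right; decide
    · have e1 : af m i = 0 := by rw [ea, if_neg h1, if_neg h2, if_neg h3]
      have e2 : af m (i+1) = 0 := by
        rcases eq_or_ne (i.val + 1) m with h5 | h5
        · rw [if_pos h5] at eb
          rw [eb]; decide
        · rw [if_neg h5] at eb
          rw [eb, if_neg (by omega), if_neg (by omega), if_neg (by omega)]
      rw [e1, e2]; left; decide

lemma sign_step (m : ℕ) [NeZero m] (hm : 3 < m) (i : ZMod m) :
    (Cneg m).sign i (i+1) = if i = 0 then -1 else 1 := by
  show (if (i = 0 ∧ i + 1 = 1) ∨ (i = 1 ∧ i + 1 = 0) then (-1:ℤ) else 1) = _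
  by_cases h : i = 0
  · subst h; norm_num
  · rw [if_neg h, if_neg]
    rintro (⟨h1, _⟩ | ⟨h1, h2⟩)
    · exact h h1
    · subst h1
      have h2' : ((2:ℕ) : ZMod m) = 0 := by push_cast; linear_combination h2
      have h3 := Nat.le_of_dvd (by norm_num) ((ZMod.natCast_eq_zero_iff 2 m).mp h2')
      omega

lemma adj_succ (m : ℕ) [NeZero m] (hm : 3 < m) (i : ZMod m) :
    (Cneg m).G.Adj i (i+1) := by
  constructor
  · intro hc
    have h1 : (1 : ZMod m) = 0 := by linear_combination - hc
    have h1' : ((1:ℕ) : ZMod m) = 0 := by push_cast; exact h1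
    have h3 := Nat.le_of_dvd (by norm_num) ((ZMod.natCast_eq_zero_iff 1 m).mp h1')
    omega
  · right; ring

lemma cartProd_sign {V1 V2 : Type*} (S1 : SGraph V1) (S2 : SGraph V2) (p q : V1 × V2) :
    (cartProd S1 S2).sign p q =
      if p.2 = q.2 then S1.sign p.1 q.1 else S2.sign p.2 q.2 := rfl

/-- The key edge lemma for one coordinate step. -/
lemma key_step (m : ℕ) [NeZero m] (hm : 3 < m) (i : ZMod m) (c : ZMod 8) :
    dotv (vec8 (af m i + c)) (vec8 (af m (i+1) + c)) ≠ 0 ∧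
      (Cneg m).sign i (i+1) *
        Int.sign (dotv (vec8 (af m i + c)) (vec8 (af m (i+1) + c))) = 1 := by
  have hs := sign_step m hm i
  rcases af_step m hm i with ⟨h0, hd⟩ | ⟨h0, hd⟩
  · have he : af m (i+1) + c = (af m i + c) + 3 := by
      have : af m (i+1) = af m i + 3 := by linear_combination hd
      rw [this]; ring
    rw [he, dotv_neg3, hs, if_pos h0]
    norm_num
  · have hpos : 0 < dotv (vec8 (af m i + c)) (vec8 (af m (i+1) + c)) := by
      rcases hd with hd | hd
      · have he : af m (i+1) + c = (af m i + c) + 0 := by linear_combination hd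
        rw [he]; exact dotv_pos _ _ (Or.inl rfl)
      · have he : af m (i+1) + c = (af m i + c) + 7 := by linear_combination hd
        rw [he]; exact dotv_pos _ _ (Or.inr rfl)
    refine ⟨by omega, ?_⟩
    rw [hs, if_neg h0, Int.sign_eq_one_of_pos hpos]
    norm_num

theorem stmt3 (m n : ℕ) [NeZero m] [NeZero n] (hm : 3 < m) (hn : 3 < n) :
    bdim (cartProd (Cneg m) (Cneg n)) = 2 := by
  set S := cartProd (Cneg m) (Cneg n) with hS
  -- upper bound: a 2-switching
  have h2 : HasPosSwitching S 2 := by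
    set ζ : ZMod m × ZMod n → Fin 2 → ℤ := fun p j =>
      if j = 0 then (vec8 (af m p.1 + af n p.2)).1
      else (vec8 (af m p.1 + af n p.2)).2 with hζ
    have hsum : ∀ u v : ZMod m × ZMod n, (∑ j : Fin 2, ζ u j * ζ v j) =
        dotv (vec8 (af m u.1 + af n u.2)) (vec8 (af m v.1 + af n v.2)) := by
      intro u v
      rw [Fin.sum_univ_two]
      simp [hζ, dotv]
    have keyall : ∀ u v : ZMod m × ZMod n, S.G.Adj u v →
        dotv (vec8 (af m u.1 + af n u.2)) (vec8 (af m v.1 + af n v.2)) ≠ 0 ∧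
          S.sign u v *
            Int.sign (dotv (vec8 (af m u.1 + af n u.2)) (vec8 (af m v.1 + af n v.2))) = 1 := by
      intro u v huv
      rcases SimpleGraph.boxProd_adj.mp huv with ⟨ha, he⟩ | ⟨ha, he⟩
      · -- horizontal edge : ha : Adj u.1 v.1, he : u.2 = v.2
        obtain ⟨hne, hd⟩ := ha
        have hsgn : S.sign u v = (Cneg m).sign u.1 v.1 := by
          rw [hS, cartProd_sign, if_pos he]
        rcases hd with hd | hd
        · -- u.1 = v.1 + 1
          have hu1 : u.1 = v.1 + 1 := by linear_combination hd
          rw [hsgn, ← he, (Cneg m).sign_symm u.1 v.1, dotv_comm]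
          have := key_step m hm v.1 (af n u.2)
          rw [← hu1] at this
          exact this
        · -- v.1 = u.1 + 1
          have hv1 : v.1 = u.1 + 1 := by linear_combination hd
          rw [hsgn, ← he, hv1]
          exact key_step m hm u.1 (af n u.2)
      · -- vertical edge : ha : Adj u.2 v.2, he : u.1 = v.1
        obtain ⟨hne, hd⟩ := ha
        have hsgn : S.sign u v = (Cneg n).sign u.2 v.2 := by
          rw [hS, cartProd_sign, if_neg hne]
        rcases hd with hd | hd
        · have hu2 : u.2 = v.2 + 1 := by linear_combination hd
          rw [hsgn, ← he, add_comm (af m u.1) (af n u.2), add_comm (af m u.1) (af n v.2),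
            (Cneg n).sign_symm u.2 v.2, dotv_comm]
          have := key_step n hn v.2 (af m u.1)
          rw [← hu2] at this
          exact this
        · have hv2 : v.2 = u.2 + 1 := by linear_combination hd
          rw [hsgn, ← he, add_comm (af m u.1) (af n u.2), add_comm (af m u.1) (af n v.2), hv2]
          exact key_step n hn u.2 (af m u.1)
    refine ⟨ζ, ?_, ?_, ?_⟩
    · intro p j
      rcases vec8_mem (af m p.1 + af n p.2) with ⟨hh1, hh2⟩
      by_cases hj : j = 0 <;> simp [hζ, hj] <;> tauto
    · intro u v huv
      rw [hsum u v]
      exact (keyall u v huv).1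
    · intro u v huv
      rw [hsum u v]
      exact (keyall u v huv).2
  -- lower bound: no 1-switching
  have h1 : ¬ HasPosSwitching S 1 := by
    rintro ⟨ζ, hval, hnz, hsg⟩
    set η : ZMod m → ℤ := fun i => ζ (i, (0 : ZMod n)) 0 with hη_def
    have adj : ∀ i : ZMod m, S.G.Adj (i, (0:ZMod n)) (i+1, (0:ZMod n)) := fun i =>
      SimpleGraph.boxProd_adj.mpr (Or.inl ⟨adj_succ m hm i, rfl⟩)
    have hsum : ∀ i : ZMod m,
        (∑ j : Fin 1, ζ (i, (0:ZMod n)) j * ζ (i+1, (0:ZMod n)) j) = η i * η (i+1) := by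
      intro i; rw [Fin.sum_univ_one]
    have hη : ∀ i : ZMod m, η i = 1 ∨ η i = -1 := by
      intro i
      have hz := hnz _ _ (adj i)
      rw [hsum i] at hz
      rcases hval (i, (0:ZMod n)) 0 with h | h | h
      · right; exact h
      · exfalso; apply hz; rw [show η i = 0 from h]; ring
      · left; exact h
    have hsign : ∀ i : ZMod m, (Cneg m).sign i (i+1) = η i * η (i+1) := by
      intro i
      have hg := hsg _ _ (adj i)
      rw [hsum i] at hg
      have hsgn : S.sign (i, (0:ZMod n)) (i+1, (0:ZMod n)) = (Cneg m).sign i (i+1) := by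
        rw [hS, cartProd_sign, if_pos rfl]
      rw [hsgn] at hg
      have hp : η i * η (i+1) = 1 ∨ η i * η (i+1) = -1 := by
        rcases hη i with e1 | e1 <;> rcases hη (i+1) with e2 | e2 <;> rw [e1, e2] <;> norm_num
      rcases hp with hp | hp
      · rw [hp] at hg ⊢
        simpa using hg
      · rw [hp] at hg ⊢
        have hsm1 : Int.sign (-1 : ℤ) = -1 := by decide
        rw [hsm1] at hg
        linear_combination -hg
    have hprod1 : ∏ i : ZMod m, (Cneg m).sign i (i+1) = -1 := by
      rw [Finset.prod_congr rfl (fun i _ => sign_step m hm i)]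
      rw [Finset.prod_eq_single (0 : ZMod m)
        (fun b _ hb => by rw [if_neg hb]) (fun hb => absurd (Finset.mem_univ _) hb)]
      rw [if_pos rfl]
    have hprod2 : ∏ i : ZMod m, (η i * η (i+1)) = 1 := by
      rw [Finset.prod_mul_distrib]
      have he : ∏ i : ZMod m, η (i+1) = ∏ i : ZMod m, η i :=
        Fintype.prod_equiv (Equiv.addRight (1 : ZMod m)) _ _ (fun i => rfl)
      rw [he, ← sq, ← Finset.prod_pow]
      rw [Finset.prod_congr rfl (fun i _ => show η i ^ 2 = 1 by
        rcases hη i with e | e <;> rw [e] <;> norm_num)]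
      rw [Finset.prod_const_one]
    rw [Finset.prod_congr rfl (fun i _ => hsign i), hprod2] at hprod1
    norm_num at hprod1
  -- conclude
  have mem2 : 2 ∈ {k | 1 ≤ k ∧ HasPosSwitching S k} := ⟨one_le_two, h2⟩
  have hle : bdim S ≤ 2 := Nat.sInf_le mem2
  have hmem : bdim S ∈ {k | 1 ≤ k ∧ HasPosSwitching S k} := Nat.sInf_mem ⟨2, mem2⟩
  obtain ⟨hge1, hhas⟩ := hmem
  have hne1 : bdim S ≠ 1 := fun hc => h1 (hc ▸ hhas)
  omega
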